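/- Let a and b be words in {↑,↓} of lengths k and l, set K = k + l, and let D : V(a↓↑b) → V(ab) be the k-linear map given on basis vectors by D(v_i) = v_{i''} if i_{k+1} = i_{k+2} and D(v_i) = 0 otherwise, where i'' ∈ B^K is obtained from i ∈ B^{K+2} by deleting the entries in positions k+1 and k+2. Let p be a positive integer such that the p-th letter of the word a↓↓b is ↑. Then: (i) D ∘ (p,q)^{a↓↑b}_λ = (p,q)^{ab}_λ ∘ D whenever q ≠ p and p, q ≤ k; (ii) D ∘ (p,q)^{a↓↑b}_λ = (p,q−2)^{ab}_λ ∘ D whenever p ≤ k and k+2 < q ≤ K+2; (iii) D ∘ (p,q)^{a↓↑b}_λ = (p−2,q)^{ab}_λ ∘ D whenever p > k+2 and q ≤ k; (iv) D ∘ (p,q)^{a↓↑b}_λ = (p−2,q−2)^{ab}_λ ∘ D whenever q ≠ p and k+2 < p, q ≤ K+2; (v) D ∘ (p,k+1)^{a↓↑b}_λ + D ∘ (p,k+2)^{a↓↑b}_λ = 0. -/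

import Mathlib

open Finset

/-- The set of boxes of the pyramid associated to `lam` (`Box.1` is the column, 0-based). -/
abbrev Box {ℓ : ℕ} (lam : Fin ℓ → ℕ) : Type := (j : Fin ℓ) × Fin (lam j)

/-- A sequence is unimodular: it weakly increases up to some index `κ` and weakly
decreases afterwards. -/
def Unimodular {ℓ : ℕ} (lam : Fin ℓ → ℕ) : Prop :=
  ∃ κ : Fin ℓ, (∀ i j : Fin ℓ, i ≤ j → j ≤ κ → lam i ≤ lam j) ∧
    (∀ i j : Fin ℓ, κ ≤ i → i ≤ j → lam j ≤ lam i)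

/-- The free `k`-module `V(a)` with basis indexed by `K`-tuples of boxes. -/
abbrev V (k : Type*) [CommRing k] {ℓ : ℕ} (lam : Fin ℓ → ℕ) (K : ℕ) : Type _ :=
  (Fin K → Box lam) →₀ k

/-- The modified transposition `(p,q)^a_λ` (positions are 0-based elements of `Fin K`;
the letter `↑` is `true` and `↓` is `false`). -/
noncomputable def modT (k : Type*) [CommRing k] {ℓ K : ℕ} (lam : Fin ℓ → ℕ)
    (a : Fin K → Bool) (p q : Fin K) : Module.End k (V k lam K) :=
  Finsupp.lift (V k lam K) k (Fin K → Box lam) (fun j =>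
    if a q then
      if q < p then
        (if (j p).1 ≤ (j q).1 then Finsupp.single (j ∘ Equiv.swap p q) (1 : k) else 0)
      else
        (if (j q).1 < (j p).1 then -Finsupp.single (j ∘ Equiv.swap p q) (1 : k) else 0)
    else
      if q < p then
        (if j p = j q then
          -∑ c ∈ univ.filter (fun c : Box lam => (j p).1 ≤ c.1),
            Finsupp.single (Function.update (Function.update j p c) q c) (1 : k)
        else 0)
      else
        (if j p = j q then
          ∑ c ∈ univ.filter (fun c : Box lam => c.1 < (j p).1),
            Finsupp.single (Function.update (Function.update j p c) q c) (1 : k)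
        else 0))
/-- The concatenation `ab` of two words. -/
def catW {kk ll : ℕ} (a : Fin kk → Bool) (b : Fin ll → Bool) : Fin (kk + ll) → Bool :=
  fun t => if h : t.val < kk then a ⟨t.val, h⟩ else b ⟨t.val - kk, by have := t.isLt; omega⟩

/-- The word `a x y b` obtained by inserting the two letters `x, y` between `a` and `b`. -/
def insW {kk ll : ℕ} (a : Fin kk → Bool) (x y : Bool) (b : Fin ll → Bool) :
    Fin (kk + ll + 2) → Bool :=
  fun t =>
    if h : t.val < kk then a ⟨t.val, h⟩
    else if h2 : t.val = kk then x
    else if h3 : t.val = kk + 1 then y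
    else b ⟨t.val - (kk + 2), by have := t.isLt; omega⟩

/-- `i⟨c⟩`: insert the box `c` in positions `k+1` and `k+2` of the tuple `i`. -/
def insB {ℓ : ℕ} {lam : Fin ℓ → ℕ} {kk ll : ℕ} (i : Fin (kk + ll) → Box lam) (c : Box lam) :
    Fin (kk + ll + 2) → Box lam :=
  fun t =>
    if h : t.val < kk then i ⟨t.val, by omega⟩
    else if h2 : t.val < kk + 2 then c
    else i ⟨t.val - 2, by have := t.isLt; omega⟩

/-- `i''`: delete the entries in positions `k+1` and `k+2` of the tuple `i`. -/
def delB {ℓ : ℕ} {lam : Fin ℓ → ℕ} {kk ll : ℕ} (i : Fin (kk + ll + 2) → Box lam) :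
    Fin (kk + ll) → Box lam :=
  fun t =>
    if h : t.val < kk then i ⟨t.val, by have := t.isLt; omega⟩
    else i ⟨t.val + 2, by have := t.isLt; omega⟩

/-- The map `D : V(a↓↑b) → V(ab)`: `v_i ↦ v_{i''}` if `i_{k+1} = i_{k+2}`, else `0`. -/
noncomputable def Dmap (k : Type*) [CommRing k] {ℓ : ℕ} (lam : Fin ℓ → ℕ) (kk ll : ℕ) :
    V k lam (kk + ll + 2) →ₗ[k] V k lam (kk + ll) :=
  Finsupp.lift (V k lam (kk + ll)) k (Fin (kk + ll + 2) → Box lam)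
    (fun i =>
      if i ⟨kk, by omega⟩ = i ⟨kk + 1, by omega⟩ then Finsupp.single (delB i) (1 : k)
      else 0)

/-! ### Auxiliary machinery -/

lemma modT_single (k : Type*) [CommRing k] {ℓ K : ℕ} (lam : Fin ℓ → ℕ)
    (a : Fin K → Bool) (p q : Fin K) (j : Fin K → Box lam) :
    modT k lam a p q (Finsupp.single j (1:k)) =
    (if a q then
      if q < p then
        (if (j p).1 ≤ (j q).1 then Finsupp.single (j ∘ Equiv.swap p q) (1 : k) else 0)
      else
        (if (j q).1 < (j p).1 then -Finsupp.single (j ∘ Equiv.swap p q) (1 : k) else 0)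
    else
      if q < p then
        (if j p = j q then
          -∑ c ∈ univ.filter (fun c : Box lam => (j p).1 ≤ c.1),
            Finsupp.single (Function.update (Function.update j p c) q c) (1 : k)
        else 0)
      else
        (if j p = j q then
          ∑ c ∈ univ.filter (fun c : Box lam => c.1 < (j p).1),
            Finsupp.single (Function.update (Function.update j p c) q c) (1 : k)
        else 0)) := by
  rw [modT, Finsupp.lift_apply, Finsupp.sum_single_index (by simp), one_smul]

lemma Dmap_single (k : Type*) [CommRing k] {ℓ : ℕ} (lam : Fin ℓ → ℕ) {kk ll : ℕ}
    (i : Fin (kk + ll + 2) → Box lam) :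
    Dmap k lam kk ll (Finsupp.single i (1:k)) =
      (if i ⟨kk, by omega⟩ = i ⟨kk + 1, by omega⟩ then Finsupp.single (delB i) (1 : k)
      else 0) := by
  rw [Dmap, Finsupp.lift_apply, Finsupp.sum_single_index (by simp), one_smul]

/-- The order embedding of positions of `ab` into positions of `a↓↑b`. -/
def phi {kk ll : ℕ} (t : Fin (kk + ll)) : Fin (kk + ll + 2) :=
  if h : t.val < kk then ⟨t.val, by omega⟩ else ⟨t.val + 2, by have := t.isLt; omega⟩

lemma phi_val_lo {kk ll : ℕ} (t : Fin (kk + ll)) (h : t.val < kk) : (phi t).val = t.val := by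
  simp [phi, h]

lemma phi_val_hi {kk ll : ℕ} (t : Fin (kk + ll)) (h : ¬ t.val < kk) :
    (phi t).val = t.val + 2 := by
  simp [phi, h]

lemma phi_ne_kk {kk ll : ℕ} (t : Fin (kk + ll)) : (phi t).val ≠ kk := by
  by_cases h : t.val < kk
  · rw [phi_val_lo t h]; omega
  · rw [phi_val_hi t h]; omega

lemma phi_ne_kk1 {kk ll : ℕ} (t : Fin (kk + ll)) : (phi t).val ≠ kk + 1 := by
  by_cases h : t.val < kk
  · rw [phi_val_lo t h]; omega
  · rw [phi_val_hi t h]; omega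

lemma phi_inj {kk ll : ℕ} : Function.Injective (phi (kk := kk) (ll := ll)) := by
  intro s t h
  unfold phi at h
  split_ifs at h <;>
    · apply Fin.ext
      have := congrArg Fin.val h
      simp only [] at this
      omega

lemma phi_lt_iff {kk ll : ℕ} (s t : Fin (kk + ll)) : phi s < phi t ↔ s < t := by
  simp only [Fin.lt_def]
  unfold phi
  split_ifs <;> simp only [Fin.val_mk] <;> omega

lemma delB_phi {ℓ : ℕ} {lam : Fin ℓ → ℕ} {kk ll : ℕ} (i : Fin (kk + ll + 2) → Box lam)
    (t : Fin (kk + ll)) : delB i t = i (phi t) := by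
  by_cases h : t.val < kk
  · rw [delB, dif_pos h]; congr 1; exact Fin.ext (phi_val_lo t h).symm
  · rw [delB, dif_neg h]; congr 1; exact Fin.ext (phi_val_hi t h).symm

lemma insW_phi {kk ll : ℕ} (a : Fin kk → Bool) (x y : Bool) (b : Fin ll → Bool)
    (t : Fin (kk + ll)) : insW a x y b (phi t) = catW a b t := by
  by_cases h : t.val < kk
  · rw [insW, dif_pos (by rw [phi_val_lo t h]; exact h), catW, dif_pos h]
    congr 1; exact Fin.ext (phi_val_lo t h)
  · have hv := phi_val_hi t h
    rw [insW, dif_neg (by omega), dif_neg (by omega), dif_neg (by omega), catW, dif_neg h]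
    congr 1; apply Fin.ext; simp only [hv]; omega

lemma swap_phi {kk ll : ℕ} (P' Q' t : Fin (kk + ll)) :
    Equiv.swap (phi P') (phi Q') (phi t) = phi (Equiv.swap P' Q' t) := by
  rcases eq_or_ne t P' with rfl | h1
  · simp
  rcases eq_or_ne t Q' with rfl | h2
  · simp
  rw [Equiv.swap_apply_of_ne_of_ne h1 h2,
    Equiv.swap_apply_of_ne_of_ne (fun h => h1 (phi_inj h)) (fun h => h2 (phi_inj h))]

/-- Master lemma covering cases (i)–(iv). -/
lemma master (k : Type*) [CommRing k] {ℓ : ℕ} (lam : Fin ℓ → ℕ) {kk ll : ℕ}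
    (a : Fin kk → Bool) (b : Fin ll → Bool) (P' Q' : Fin (kk + ll)) :
    Dmap k lam kk ll ∘ₗ modT k lam (insW a false true b) (phi P') (phi Q')
      = modT k lam (catW a b) P' Q' ∘ₗ Dmap k lam kk ll := by
  refine Finsupp.lhom_ext' fun j => LinearMap.ext_ring ?_
  simp only [LinearMap.comp_apply, Finsupp.lsingle_apply]
  rw [modT_single, Dmap_single]
  have hkP : (⟨kk, by omega⟩ : Fin (kk + ll + 2)) ≠ phi P' :=
    fun h => phi_ne_kk P' (congrArg Fin.val h).symm
  have hkQ : (⟨kk, by omega⟩ : Fin (kk + ll + 2)) ≠ phi Q' :=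
    fun h => phi_ne_kk Q' (congrArg Fin.val h).symm
  have hk1P : (⟨kk + 1, by omega⟩ : Fin (kk + ll + 2)) ≠ phi P' :=
    fun h => phi_ne_kk1 P' (congrArg Fin.val h).symm
  have hk1Q : (⟨kk + 1, by omega⟩ : Fin (kk + ll + 2)) ≠ phi Q' :=
    fun h => phi_ne_kk1 Q' (congrArg Fin.val h).symm
  have hswD : delB (j ∘ Equiv.swap (phi P') (phi Q')) = delB j ∘ Equiv.swap P' Q' := by
    funext t
    rw [delB_phi, Function.comp_apply, swap_phi, Function.comp_apply, delB_phi]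
  have hupdD : ∀ c : Box lam,
      delB (Function.update (Function.update j (phi P') c) (phi Q') c)
        = Function.update (Function.update (delB j) P' c) Q' c := by
    intro c; funext t
    rw [delB_phi]
    by_cases h2 : t = Q'
    · subst h2; rw [Function.update_self, Function.update_self]
    · rw [Function.update_of_ne (fun h => h2 (phi_inj h)), Function.update_of_ne h2]
      by_cases h1 : t = P'
      · subst h1; rw [Function.update_self, Function.update_self]
      · rw [Function.update_of_ne (fun h => h1 (phi_inj h)), Function.update_of_ne h1,
          delB_phi]
  by_cases hc : j ⟨kk, by omega⟩ = j ⟨kk + 1, by omega⟩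
  · rw [if_pos hc, modT_single]
    simp only [insW_phi, phi_lt_iff, ← delB_phi]
    split_ifs <;>
      simp_all [Dmap_single, Equiv.swap_apply_of_ne_of_ne, hswD, hupdD,
        Function.update_of_ne hkP, Function.update_of_ne hkQ,
        Function.update_of_ne hk1P, Function.update_of_ne hk1Q,
        Equiv.swap_apply_of_ne_of_ne hkP hkQ, Equiv.swap_apply_of_ne_of_ne hk1P hk1Q]
  · rw [if_neg hc, map_zero]
    split_ifs <;>
      simp_all [Dmap_single,
        Function.update_of_ne hkP, Function.update_of_ne hkQ,
        Function.update_of_ne hk1P, Function.update_of_ne hk1Q,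
        Equiv.swap_apply_of_ne_of_ne hkP hkQ, Equiv.swap_apply_of_ne_of_ne hk1P hk1Q]

set_option maxHeartbeats 1000000 in
/-- Lemma 4.4: interaction of `D` with the modified transpositions.  Positions
`p, q` are 1-based as in the paper. -/
theorem Dmap_modT
    (k : Type*) [CommRing k] {ℓ : ℕ} (hℓ : 1 ≤ ℓ)
    (lam : Fin ℓ → ℕ) (hpos : ∀ j, 0 < lam j) (huni : Unimodular lam)
    (m : Fin ℓ → k) (kk ll : ℕ)
    (a : Fin kk → Bool) (b : Fin ll → Bool)
    (p : ℕ) (hp1 : 1 ≤ p) (hpK : p ≤ kk + ll + 2)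
    (hup : insW a false false b ⟨p - 1, by omega⟩ = true) :
    -- (i)
    (∀ (q : ℕ) (hq1 : 1 ≤ q) (hqk : q ≤ kk) (hpk : p ≤ kk) (hqp : q ≠ p),
      (Dmap k lam kk ll) ∘ₗ
          (modT k lam (insW a false true b) ⟨p - 1, by omega⟩ ⟨q - 1, by omega⟩) =
        (modT k lam (catW a b) ⟨p - 1, by omega⟩ ⟨q - 1, by omega⟩) ∘ₗ
          (Dmap k lam kk ll)) ∧
    -- (ii)
    (∀ (q : ℕ) (hpk : p ≤ kk) (hq1 : kk + 2 < q) (hqK : q ≤ kk + ll + 2),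
      (Dmap k lam kk ll) ∘ₗ
          (modT k lam (insW a false true b) ⟨p - 1, by omega⟩ ⟨q - 1, by omega⟩) =
        (modT k lam (catW a b) ⟨p - 1, by omega⟩ ⟨q - 2 - 1, by omega⟩) ∘ₗ
          (Dmap k lam kk ll)) ∧
    -- (iii)
    (∀ (q : ℕ) (hpk : kk + 2 < p) (hq1 : 1 ≤ q) (hqk : q ≤ kk),
      (Dmap k lam kk ll) ∘ₗ
          (modT k lam (insW a false true b) ⟨p - 1, by omega⟩ ⟨q - 1, by omega⟩) =
        (modT k lam (catW a b) ⟨p - 2 - 1, by omega⟩ ⟨q - 1, by omega⟩) ∘ₗ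
          (Dmap k lam kk ll)) ∧
    -- (iv)
    (∀ (q : ℕ) (hpk : kk + 2 < p) (hq1 : kk + 2 < q) (hqK : q ≤ kk + ll + 2) (hqp : q ≠ p),
      (Dmap k lam kk ll) ∘ₗ
          (modT k lam (insW a false true b) ⟨p - 1, by omega⟩ ⟨q - 1, by omega⟩) =
        (modT k lam (catW a b) ⟨p - 2 - 1, by omega⟩ ⟨q - 2 - 1, by omega⟩) ∘ₗ
          (Dmap k lam kk ll)) ∧
    -- (v)
    ((Dmap k lam kk ll) ∘ₗ
        (modT k lam (insW a false true b) ⟨p - 1, by omega⟩ ⟨kk, by omega⟩) +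
      (Dmap k lam kk ll) ∘ₗ
        (modT k lam (insW a false true b) ⟨p - 1, by omega⟩ ⟨kk + 1, by omega⟩) = 0) := by
  refine ⟨?_, ?_, ?_, ?_, ?_⟩
  -- (i)
  · intro q hq1 hqk hpk hqp
    have e1 : (⟨p - 1, by omega⟩ : Fin (kk + ll + 2))
        = phi (⟨p - 1, by omega⟩ : Fin (kk + ll)) := by
      exact Fin.ext (phi_val_lo (⟨p - 1, by omega⟩ : Fin (kk + ll))
        (show p - 1 < kk by omega)).symm
    have e2 : (⟨q - 1, by omega⟩ : Fin (kk + ll + 2))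
        = phi (⟨q - 1, by omega⟩ : Fin (kk + ll)) := by
      exact Fin.ext (phi_val_lo (⟨q - 1, by omega⟩ : Fin (kk + ll))
        (show q - 1 < kk by omega)).symm
    rw [e1, e2]; exact master k lam a b _ _
  -- (ii)
  · intro q hpk hq1 hqK
    have e1 : (⟨p - 1, by omega⟩ : Fin (kk + ll + 2))
        = phi (⟨p - 1, by omega⟩ : Fin (kk + ll)) := by
      exact Fin.ext (phi_val_lo (⟨p - 1, by omega⟩ : Fin (kk + ll))
        (show p - 1 < kk by omega)).symm
    have e2 : (⟨q - 1, by omega⟩ : Fin (kk + ll + 2))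
        = phi (⟨q - 2 - 1, by omega⟩ : Fin (kk + ll)) := by
      have hv : (phi (⟨q - 2 - 1, by omega⟩ : Fin (kk + ll))).val = q - 2 - 1 + 2 :=
        phi_val_hi _ (show ¬ q - 2 - 1 < kk by omega)
      exact Fin.ext (by rw [hv]; exact (show q - 1 = q - 2 - 1 + 2 by omega))
    rw [e1, e2]; exact master k lam a b _ _
  -- (iii)
  · intro q hpk hq1 hqk
    have e1 : (⟨p - 1, by omega⟩ : Fin (kk + ll + 2))
        = phi (⟨p - 2 - 1, by omega⟩ : Fin (kk + ll)) := by
      have hv : (phi (⟨p - 2 - 1, by omega⟩ : Fin (kk + ll))).val = p - 2 - 1 + 2 :=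
        phi_val_hi _ (show ¬ p - 2 - 1 < kk by omega)
      exact Fin.ext (by rw [hv]; exact (show p - 1 = p - 2 - 1 + 2 by omega))
    have e2 : (⟨q - 1, by omega⟩ : Fin (kk + ll + 2))
        = phi (⟨q - 1, by omega⟩ : Fin (kk + ll)) := by
      exact Fin.ext (phi_val_lo (⟨q - 1, by omega⟩ : Fin (kk + ll))
        (show q - 1 < kk by omega)).symm
    rw [e1, e2]; exact master k lam a b _ _
  -- (iv)
  · intro q hpk hq1 hqK hqp
    have e1 : (⟨p - 1, by omega⟩ : Fin (kk + ll + 2))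
        = phi (⟨p - 2 - 1, by omega⟩ : Fin (kk + ll)) := by
      have hv : (phi (⟨p - 2 - 1, by omega⟩ : Fin (kk + ll))).val = p - 2 - 1 + 2 :=
        phi_val_hi _ (show ¬ p - 2 - 1 < kk by omega)
      exact Fin.ext (by rw [hv]; exact (show p - 1 = p - 2 - 1 + 2 by omega))
    have e2 : (⟨q - 1, by omega⟩ : Fin (kk + ll + 2))
        = phi (⟨q - 2 - 1, by omega⟩ : Fin (kk + ll)) := by
      have hv : (phi (⟨q - 2 - 1, by omega⟩ : Fin (kk + ll))).val = q - 2 - 1 + 2 :=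
        phi_val_hi _ (show ¬ q - 2 - 1 < kk by omega)
      exact Fin.ext (by rw [hv]; exact (show q - 1 = q - 2 - 1 + 2 by omega))
    rw [e1, e2]; exact master k lam a b _ _
  -- (v)
  · have hP : p - 1 < kk ∨ kk + 1 < p - 1 := by
      by_contra hcon
      push_neg at hcon
      obtain ⟨h1, h2⟩ := hcon
      have hor : p - 1 = kk ∨ p - 1 = kk + 1 := by omega
      simp only [insW] at hup
      rcases hor with h | h <;> simp [h] at hup
    set P : Fin (kk + ll + 2) := ⟨p - 1, by omega⟩ with hPdef
    set qk : Fin (kk + ll + 2) := ⟨kk, by omega⟩ with hqkdef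
    set qk1 : Fin (kk + ll + 2) := ⟨kk + 1, by omega⟩ with hqk1def
    have hl1 : insW a false true b qk = false := by simp [insW, hqkdef]
    have hl2 : insW a false true b qk1 = true := by simp [insW, hqk1def]
    have hPk : qk ≠ P := by
      simp only [hqkdef, hPdef, ne_eq, Fin.mk.injEq]; omega
    have hPk1 : qk1 ≠ P := by
      simp only [hqk1def, hPdef, ne_eq, Fin.mk.injEq]; omega
    have hkk1 : qk ≠ qk1 := by
      simp only [hqkdef, hqk1def, ne_eq, Fin.mk.injEq]; omega
    have horder : qk1 < P ↔ qk < P := by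
      simp only [hqkdef, hqk1def, hPdef, Fin.lt_def]; omega
    refine Finsupp.lhom_ext' fun j => LinearMap.ext_ring ?_
    simp only [LinearMap.add_apply, LinearMap.comp_apply, Finsupp.lsingle_apply,
      LinearMap.zero_apply, modT_single, hl1, hl2, Bool.false_eq_true, if_false,
      eq_self_iff_true, if_true]
    have hswkk : (j ∘ Equiv.swap P qk1) qk = j qk := by
      simp [Equiv.swap_apply_of_ne_of_ne hPk hkk1]
    have hswkk1 : (j ∘ Equiv.swap P qk1) qk1 = j P := by
      simp [Equiv.swap_apply_right]
    have hupk : ∀ c : Box lam, (Function.update (Function.update j P c) qk c) qk = c := by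
      intro c; rw [Function.update_self]
    have hupk1 : ∀ c : Box lam,
        (Function.update (Function.update j P c) qk c) qk1 = j qk1 := by
      intro c
      rw [Function.update_of_ne hkk1.symm, Function.update_of_ne hPk1]
    have hAB : delB (Function.update (Function.update j P (j qk1)) qk (j qk1))
        = delB (j ∘ Equiv.swap P qk1) := by
      funext t
      rw [delB_phi, delB_phi]
      have hu1 : phi t ≠ qk := fun h => phi_ne_kk t (congrArg Fin.val h)
      have hu2 : phi t ≠ qk1 := fun h => phi_ne_kk1 t (congrArg Fin.val h)
      rw [Function.update_of_ne hu1, Function.comp_apply]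
      by_cases hp : phi t = P
      · rw [hp, Function.update_self, Equiv.swap_apply_left]
      · rw [Function.update_of_ne hp, Equiv.swap_apply_of_ne_of_ne hp hu2]
    simp only [apply_ite (Dmap k lam kk ll), map_zero, map_neg, map_sum, Dmap_single,
      hupk, hupk1, hswkk, hswkk1, horder]
    simp only [← hqkdef, ← hqk1def, hupk, hupk1, hswkk, hswkk1, horder]
    simp only [Finset.sum_ite_eq', Finset.mem_filter, Finset.mem_univ, true_and, hAB]
    split_ifs <;> try abel
    all_goals
      rename_i hA hmid hB
      first
        | exact absurd hA.symm hB
        | exact absurd hB.symm hA
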